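/- For every μ ∈ [-0.5, 0.5], the matrix A(μ) = P⁻¹(A_0^q + E_0^q μ)/2 satisfies A(μ)ᵀ P + P A(μ) = -Q where Q = diag(0,0,0,1/R) ≥ 0. In particular the circuit energy V(x) = xᵀ P x is nonincreasing along trajectories of ẋ = A(μ(t)) x for any measurable μ(t) ∈ [-0.5, 0.5]. -/

import Mathlib

open Matrix

set_option maxHeartbeats 1000000 in
/-- Lyapunov equation A(μ)ᵀP + PA(μ) = -Q with Q = diag(0,0,0,1/R) ⪰ 0,
and the circuit energy V(x) = xᵀPx is nonincreasing along trajectories. -/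
theorem lyapunov_equation_energy_nonincreasing
    (L1 L2 C1 C2 R : ℝ) (hL1 : 0 < L1) (hL2 : 0 < L2) (hC1 : 0 < C1)
    (hC2 : 0 < C2) (hR : 0 < R)
    (P : Matrix (Fin 4) (Fin 4) ℝ) (hP : P = (1/2 : ℝ) • Matrix.diagonal ![L1, L2, C1, C2])
    (A0q E0q : Matrix (Fin 4) (Fin 4) ℝ)
    (hA0q : A0q = !![0,0,-1/2,0; 0,0,1/2,1; 1/2,-1/2,0,0; 0,-1,0,-1/R])
    (hE0q : E0q = !![0,0,1,0; 0,0,1,0; -1,-1,0,0; 0,0,0,0])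
    (A : ℝ → Matrix (Fin 4) (Fin 4) ℝ)
    (hA : ∀ μ, A μ = (1/2 : ℝ) • (P⁻¹ * (A0q + μ • E0q)))
    (Q : Matrix (Fin 4) (Fin 4) ℝ) (hQ : Q = Matrix.diagonal ![0, 0, 0, 1/R]) :
    (∀ μ ∈ Set.Icc (-(0.5:ℝ)) 0.5, (A μ)ᵀ * P + P * A μ = -Q) ∧
    Q.PosSemidef ∧
    (∀ μ : ℝ → ℝ, Measurable μ → (∀ t, μ t ∈ Set.Icc (-(0.5:ℝ)) 0.5) →
      ∀ x : ℝ → Fin 4 → ℝ,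
        (∀ t, HasDerivAt x (A (μ t) *ᵥ x t) t) →
        Antitone (fun t => x t ⬝ᵥ (P *ᵥ x t))) := by
  have key : ∀ μ : ℝ, (A μ)ᵀ * P + P * A μ = -Q := by
    intro μ
    have hd : P.det = (1/2:ℝ)^4 * (L1 * (L2 * (C1 * (C2 * 1)))) := by
      rw [hP, Matrix.det_smul, Matrix.det_diagonal]
      norm_num [Fin.prod_univ_four]; change L1 * L2 * C1 * C2 = _; ring
    have hdet : IsUnit P.det := by
      rw [hd]; apply isUnit_iff_ne_zero.mpr; positivity
    have hPP : P * P⁻¹ = 1 := Matrix.mul_nonsing_inv P hdet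
    have hPP' : P⁻¹ * P = 1 := Matrix.nonsing_inv_mul P hdet
    have hPs : Pᵀ = P := by simp [hP, Matrix.transpose_smul]
    have h1 : P * A μ = (1/2:ℝ) • (A0q + μ • E0q) := by
      rw [hA, Matrix.mul_smul, ← Matrix.mul_assoc, hPP, Matrix.one_mul]
    have h2 : (A μ)ᵀ * P = (1/2:ℝ) • (A0q + μ • E0q)ᵀ := by
      rw [hA, Matrix.transpose_smul, Matrix.transpose_mul, Matrix.smul_mul, Matrix.mul_assoc,
        Matrix.transpose_nonsing_inv, hPs, hPP', Matrix.mul_one]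
    have hA0T : A0qᵀ = !![0,0,1/2,0; 0,0,-1/2,-1; -1/2,1/2,0,0; 0,1,0,-1/R] := by
      subst hA0q; ext i j; fin_cases i <;> fin_cases j <;> rfl
    have hE0T : E0qᵀ = !![0,0,-1,0; 0,0,-1,0; 1,1,0,0; 0,0,0,0] := by
      subst hE0q; ext i j; fin_cases i <;> fin_cases j <;> rfl
    rw [h1, h2, Matrix.transpose_add, Matrix.transpose_smul, hA0T, hE0T, hQ]
    subst hA0q hE0q
    ext i j
    fin_cases i <;> fin_cases j <;>
      simp [Matrix.add_apply, Matrix.smul_apply, Matrix.neg_apply, Matrix.diagonal_apply,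
        Matrix.vecHead, Matrix.vecTail] <;> ring
  have hQpsd : Q.PosSemidef := by
    rw [hQ]
    refine Matrix.PosSemidef.diagonal ?_
    intro i
    fin_cases i <;> simp [Matrix.vecHead, Matrix.vecTail] <;> positivity
  refine ⟨fun μ _ => key μ, hQpsd, ?_⟩
  intro μ _hμm _hμb x hx
  have hbil : ∀ (B M : Matrix (Fin 4) (Fin 4) ℝ) (y : Fin 4 → ℝ),
      (B *ᵥ y) ⬝ᵥ (M *ᵥ y) + y ⬝ᵥ (M *ᵥ (B *ᵥ y)) = y ⬝ᵥ ((Bᵀ * M + M * B) *ᵥ y) := by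
    intro B M y
    simp [dotProduct, mulVec, Matrix.mul_apply, Matrix.add_apply, Matrix.transpose_apply,
      Fin.sum_univ_four]
    ring
  have hder : ∀ t, HasDerivAt (fun s => x s ⬝ᵥ (P *ᵥ x s)) (-(x t ⬝ᵥ (Q *ᵥ x t))) t := by
    intro t
    have hxi : ∀ i, HasDerivAt (fun s => x s i) ((A (μ t) *ᵥ x t) i) t := hasDerivAt_pi.1 (hx t)
    have h : HasDerivAt (fun s => ∑ i, x s i * ∑ j, P i j * x s j)
        (∑ i, ((A (μ t) *ᵥ x t) i * ∑ j, P i j * x t j +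
          x t i * ∑ j, P i j * (A (μ t) *ᵥ x t) j)) t := by
      apply HasDerivAt.fun_sum
      intro i _
      exact (hxi i).mul (HasDerivAt.fun_sum fun j _ => (hxi j).const_mul (P i j))
    convert h using 1
    · funext s; rfl
    calc -(x t ⬝ᵥ (Q *ᵥ x t))
        = x t ⬝ᵥ (((A (μ t))ᵀ * P + P * (A (μ t))) *ᵥ x t) := by
          rw [key (μ t)]
          simp [Matrix.neg_mulVec, dotProduct_neg]
      _ = (A (μ t) *ᵥ x t) ⬝ᵥ (P *ᵥ x t) + x t ⬝ᵥ (P *ᵥ (A (μ t) *ᵥ x t)) :=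
          (hbil _ _ _).symm
      _ = ∑ i, ((A (μ t) *ᵥ x t) i * ∑ j, P i j * x t j +
            x t i * ∑ j, P i j * (A (μ t) *ᵥ x t) j) := by
          simp [dotProduct, mulVec, Finset.sum_add_distrib, Finset.mul_sum]
  apply antitone_of_deriv_nonpos
  · exact fun t => (hder t).differentiableAt
  · intro t
    rw [(hder t).deriv]
    have h0 := hQpsd.dotProduct_mulVec_nonneg (x t)
    simp only [star_trivial] at h0
    linarith
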